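/- arXiv:2312.10029 — 9 statements merged into one kernel-verified Lean document; each statement's English description precedes it below -/
import Mathlib

section
/- Let Q be a finite set of questions and let h : Q → {0,1} be an arbitrary binary feature. Define the probe p⁺(q) = h(q) and p⁻(q) = 1 − h(q) for every q ∈ Q. Then the total CCS loss of this probe is zero: Σ_{q ∈ Q} [ (p⁺(q) − (1 − p⁻(q)))² + (min(p⁺(q), p⁻(q)))² ] = 0. -/
/-- For a binary feature `h`, the probe `p⁺ = h`, `p⁻ = 1 - h`
has total CCS loss zero. -/
theorem ccs_loss_zero_of_binary_feature {Q : Type*} [Fintype Q]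
    (h : Q → ℝ) (hbin : ∀ q, h q = 0 ∨ h q = 1) :
    ∑ q : Q, ((h q - (1 - (1 - h q))) ^ 2 + (min (h q) (1 - h q)) ^ 2) = 0 := by
  apply Finset.sum_eq_zero
  intro q _
  rcases hbin q with hq | hq <;> simp [hq]
end

section
/- Let Q be a set of questions, p⁺, p⁻ : Q → ℝ a probe, and h : Q → {0,1} a binary feature. Define the transformed probe p'⁺(q) = p⁺(q) ⊕ h(q) and p'⁻(q) = p⁻(q) ⊕ h(q), where a ⊕ b = (1 − a)·b + (1 − b)·a. Then for every q ∈ Q the consistency loss is preserved: (p'⁺(q) − (1 − p'⁻(q)))² = (p⁺(q) − (1 − p⁻(q)))². -/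
/-- The continuous exclusive-or of two reals. -/
def cxor (a b : ℝ) : ℝ := (1 - a) * b + (1 - b) * a

/-- Transforming a probe by `⊕ h(q)` with a binary feature `h`
preserves the consistency loss at every question. -/
theorem consistency_loss_preserved_under_cxor {Q : Type*}
    (pp pm : Q → ℝ) (h : Q → ℝ) (hbin : ∀ q, h q = 0 ∨ h q = 1) :
    ∀ q : Q,
      (cxor (pp q) (h q) - (1 - cxor (pm q) (h q))) ^ 2
        = (pp q - (1 - pm q)) ^ 2 := by
  intro q
  rcases hbin q with hq | hq <;> simp [cxor, hq] <;> ring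
end

section
/- Let Q be a set of questions, p⁺, p⁻ : Q → ℝ a probe, and h : Q → {0,1} a binary feature. Define the transformed probe p'⁺(q) = p⁺(q) ⊕ h(q) and p'⁻(q) = p⁻(q) ⊕ h(q), where a ⊕ b = (1 − a)·b + (1 − b)·a. Then for every q ∈ Q the symmetric confidence loss is preserved: (min{p'⁺(q), p'⁻(q), 1 − p'⁺(q), 1 − p'⁻(q)})² = (min{p⁺(q), p⁻(q), 1 − p⁺(q), 1 − p⁻(q)})². -/
/-- Transforming a probe by `⊕ h(q)` with a binary feature `h`
preserves the symmetric confidence loss at every question. -/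
theorem symmetric_confidence_loss_preserved_under_cxor {Q : Type*}
    (pp pm : Q → ℝ) (h : Q → ℝ) (hbin : ∀ q, h q = 0 ∨ h q = 1) :
    ∀ q : Q,
      (min (min (cxor (pp q) (h q)) (cxor (pm q) (h q)))
           (min (1 - cxor (pp q) (h q)) (1 - cxor (pm q) (h q)))) ^ 2
        = (min (min (pp q) (pm q)) (min (1 - pp q) (1 - pm q))) ^ 2 := by
  intro q
  rcases hbin q with h0 | h1
  · simp [cxor, h0]
  · simp only [cxor, h1]
    ring_nf
    rw [min_comm (min (1 - pp q) (1 - pm q))]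
end

section
/- Let Q be a finite set of questions, p⁺, p⁻ : Q → ℝ a probe, and h : Q → {0,1} a binary feature. Define the transformed probe p'⁺(q) = p⁺(q) ⊕ h(q) and p'⁻(q) = p⁻(q) ⊕ h(q), where a ⊕ b = (1 − a)·b + (1 − b)·a. Then the total symmetric CCS losses are equal: Σ_{q ∈ Q} [ (p'⁺(q) − (1 − p'⁻(q)))² + (min{p'⁺(q), p'⁻(q), 1 − p'⁺(q), 1 − p'⁻(q)})² ] = Σ_{q ∈ Q} [ (p⁺(q) − (1 − p⁻(q)))² + (min{p⁺(q), p⁻(q), 1 − p⁺(q), 1 − p⁻(q)})² ]. -/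
/-- Transforming a probe by `⊕ h(q)` with a binary feature `h`
preserves the total symmetric CCS loss. -/
theorem symmetric_ccs_loss_preserved_under_cxor {Q : Type*} [Fintype Q]
    (pp pm : Q → ℝ) (h : Q → ℝ) (hbin : ∀ q, h q = 0 ∨ h q = 1) :
    ∑ q : Q, ((cxor (pp q) (h q) - (1 - cxor (pm q) (h q))) ^ 2 +
        (min (min (cxor (pp q) (h q)) (cxor (pm q) (h q)))
             (min (1 - cxor (pp q) (h q)) (1 - cxor (pm q) (h q)))) ^ 2)
      = ∑ q : Q, ((pp q - (1 - pm q)) ^ 2 +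
        (min (min (pp q) (pm q)) (min (1 - pp q) (1 - pm q))) ^ 2) := by
  apply Finset.sum_congr rfl
  intro q _
  rcases hbin q with h0 | h1
  · simp [cxor, h0]
  · have ha : cxor (pp q) (h q) = 1 - pp q := by simp [cxor, h1]
    have hb : cxor (pm q) (h q) = 1 - pm q := by simp [cxor, h1]
    rw [ha, hb]
    have : (1 - pp q - (1 - (1 - pm q))) ^ 2 = (pp q - (1 - pm q)) ^ 2 := by ring
    rw [this, min_comm (min (1 - pp q) (1 - pm q))]
    congr 2
    ring_nf
end

section
/- Let Q be a set of questions, p⁺, p⁻ : Q → ℝ a probe, and h : Q → {0,1} a binary feature. Define the transformed probe p'⁺(q) = p⁺(q) ⊕ h(q) and p'⁻(q) = p⁻(q) ⊕ h(q), where a ⊕ b = (1 − a)·b + (1 − b)·a. Suppose that the averaged prediction satisfies p̃(q) ≠ 1/2 for every q ∈ Q. Then the induced classifier of the transformed probe satisfies f_{p'}(q) = f_p(q) ⊕ h(q) for every q ∈ Q (where on binary values ⊕ coincides with exclusive-or). -/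
/-- If the averaged prediction is never exactly 1/2, then the induced
classifier of the transformed probe `p' = p ⊕ h` is `f_p ⊕ h`. -/
theorem induced_classifier_under_cxor {Q : Type*}
    (pp pm : Q → ℝ) (h : Q → ℝ) (hbin : ∀ q, h q = 0 ∨ h q = 1)
    (hne : ∀ q : Q, (pp q + (1 - pm q)) / 2 ≠ 1 / 2) :
    ∀ q : Q,
      (if (cxor (pp q) (h q) + (1 - cxor (pm q) (h q))) / 2 > 1 / 2 then (1:ℝ) else 0)
        = cxor (if (pp q + (1 - pm q)) / 2 > 1 / 2 then (1:ℝ) else 0) (h q) := by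
  intro q
  rcases lt_or_gt_of_ne (hne q) with hlt | hgt <;>
    rcases hbin q with hq | hq <;> rw [hq] <;> unfold cxor
  · rw [if_neg (by linarith), if_neg (by linarith)]; ring
  · rw [if_pos (by linarith), if_neg (by linarith)]; ring
  · rw [if_pos (by linarith), if_pos (by linarith)]; ring
  · rw [if_neg (by linarith), if_pos (by linarith)]; ring
end

section
/- Let Q be a finite set of questions, p⁺, p⁻ : Q → ℝ a probe, and g : Q → {0,1} an arbitrary binary map. Let f_p be the induced classifier of p and define h(q) = f_p(q) ⊕ g(q) (exclusive-or of binary values). Define the transformed probe p'⁺(q) = p⁺(q) ⊕ h(q) and p'⁻(q) = p⁻(q) ⊕ h(q), where a ⊕ b = (1 − a)·b + (1 − b)·a. Then the total symmetric CCS loss of p' equals that of p: Σ_{q ∈ Q} [ (p'⁺(q) − (1 − p'⁻(q)))² + (min{p'⁺(q), p'⁻(q), 1 − p'⁺(q), 1 − p'⁻(q)})² ] = Σ_{q ∈ Q} [ (p⁺(q) − (1 − p⁻(q)))² + (min{p⁺(q), p⁻(q), 1 − p⁺(q), 1 − p⁻(q)})² ]. -/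
/-- Let `f_p` be the induced classifier of a probe `p`, let `g` be an
arbitrary binary map, and set `h = f_p ⊕ g`. Then the transformed probe
`p' = p ⊕ h` has the same total symmetric CCS loss as `p`. -/
theorem symmetric_ccs_loss_preserved_by_classifier_transform {Q : Type*} [Fintype Q]
    (pp pm : Q → ℝ) (g : Q → ℝ) (hg : ∀ q, g q = 0 ∨ g q = 1)
    (fp : Q → ℝ)
    (hfp : ∀ q, fp q = if (pp q + (1 - pm q)) / 2 > 1 / 2 then (1:ℝ) else 0)
    (h : Q → ℝ) (hh : ∀ q, h q = cxor (fp q) (g q))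
    (pp' pm' : Q → ℝ)
    (hpp' : ∀ q, pp' q = cxor (pp q) (h q))
    (hpm' : ∀ q, pm' q = cxor (pm q) (h q)) :
    ∑ q : Q, ((pp' q - (1 - pm' q)) ^ 2 +
        (min (min (pp' q) (pm' q)) (min (1 - pp' q) (1 - pm' q))) ^ 2)
      = ∑ q : Q, ((pp q - (1 - pm q)) ^ 2 +
        (min (min (pp q) (pm q)) (min (1 - pp q) (1 - pm q))) ^ 2) := by
  apply Finset.sum_congr rfl
  intro q _
  have hfp01 : fp q = 0 ∨ fp q = 1 := by
    rw [hfp q]; split <;> simp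
  have hh01 : h q = 0 ∨ h q = 1 := by
    rw [hh q]
    rcases hfp01 with h1 | h1 <;> rcases hg q with h2 | h2 <;>
      simp [cxor, h1, h2]
  rcases hh01 with h0 | h0
  · rw [hpp' q, hpm' q, h0]
    simp [cxor]
  · rw [hpp' q, hpm' q, h0]
    have e1 : cxor (pp q) 1 = 1 - pp q := by simp [cxor]
    have e2 : cxor (pm q) 1 = 1 - pm q := by simp [cxor]
    rw [e1, e2]
    have : min (min (1 - pp q) (1 - pm q)) (min (1 - (1 - pp q)) (1 - (1 - pm q)))
        = min (min (pp q) (pm q)) (min (1 - pp q) (1 - pm q)) := by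
      rw [min_comm (min (1 - pp q) (1 - pm q))]
      ring_nf
    rw [this]
    ring
end

section
/- Let Q be a set of questions, p⁺, p⁻ : Q → ℝ a probe whose averaged prediction satisfies p̃(q) ≠ 1/2 for every q ∈ Q, and let g : Q → {0,1} be an arbitrary binary map. Let f_p be the induced classifier of p, set h(q) = f_p(q) ⊕ g(q) (exclusive-or of binary values), and define the transformed probe p'⁺(q) = p⁺(q) ⊕ h(q), p'⁻(q) = p⁻(q) ⊕ h(q), where a ⊕ b = (1 − a)·b + (1 − b)·a. Then the induced classifier of p' equals the arbitrary map g: f_{p'}(q) = g(q) for every q ∈ Q. -/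
/-- If the averaged prediction of a probe is never exactly 1/2, then
transforming the probe by `⊕ h` with `h = f_p ⊕ g` makes the induced classifier
equal to the arbitrary binary map `g`. -/
theorem transformed_probe_induces_arbitrary_classifier {Q : Type*}
    (pp pm : Q → ℝ) (hne : ∀ q : Q, (pp q + (1 - pm q)) / 2 ≠ 1 / 2)
    (g : Q → ℝ) (hg : ∀ q, g q = 0 ∨ g q = 1)
    (fp : Q → ℝ)
    (hfp : ∀ q, fp q = if (pp q + (1 - pm q)) / 2 > 1 / 2 then (1:ℝ) else 0)
    (h : Q → ℝ) (hh : ∀ q, h q = cxor (fp q) (g q))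
    (pp' pm' : Q → ℝ)
    (hpp' : ∀ q, pp' q = cxor (pp q) (h q))
    (hpm' : ∀ q, pm' q = cxor (pm q) (h q)) :
    ∀ q : Q,
      (if (pp' q + (1 - pm' q)) / 2 > 1 / 2 then (1:ℝ) else 0) = g q := by
  intro q
  have hne := hne q
  rw [hpp' q, hpm' q, hh q, hfp q]
  rcases hg q with hgq | hgq <;> by_cases hc : (pp q + (1 - pm q)) / 2 > 1 / 2 <;>
      simp only [hgq, hc, if_true, if_false, cxor]
  · rw [if_neg]; push_neg; nlinarith
  · rw [if_neg]; push_neg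
    push_neg at hc
    nlinarith
  · rw [if_pos]; nlinarith
  · rw [if_pos]
    push_neg at hc
    have := lt_of_le_of_ne hc hne
    nlinarith
end

section
/- Consider a constant probe with p⁺(q) = p⁻(q) = k for all questions, with k ∈ [0,1]. Its per-question symmetric CCS loss is (2k − 1)² + (min(k, 1 − k))², and the set of minimizers of this function over [0,1] is exactly {2/5, 3/5}, which is symmetric around 1/2. -/
lemma ccs_lb (k : ℝ) (hk : k ∈ Set.Icc (0:ℝ) 1) :
    (1/5 : ℝ) ≤ (2 * k - 1) ^ 2 + (min k (1 - k)) ^ 2 := by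
  rcases le_total k (1 - k) with h | h
  · rw [min_eq_left h]; nlinarith [sq_nonneg (5 * k - 2)]
  · rw [min_eq_right h]; nlinarith [sq_nonneg (5 * k - 3)]

/-- The per-question symmetric CCS loss of the constant probe
`p⁺ = p⁻ = k` is `(2k - 1)² + (min(k, 1 - k))²`, and the set of its minimizers
over `[0,1]` is exactly `{2/5, 3/5}`. -/
theorem constant_probe_symmetric_ccs_loss_minimizers :
    (∀ k : ℝ, (k - (1 - k)) ^ 2 + (min (min k k) (min (1 - k) (1 - k))) ^ 2
        = (2 * k - 1) ^ 2 + (min k (1 - k)) ^ 2) ∧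
    ({k : ℝ | k ∈ Set.Icc (0:ℝ) 1 ∧
        ∀ k' ∈ Set.Icc (0:ℝ) 1,
          (2 * k - 1) ^ 2 + (min k (1 - k)) ^ 2
            ≤ (2 * k' - 1) ^ 2 + (min k' (1 - k')) ^ 2}
      = {2/5, 3/5}) := by
  have hval : ((2 : ℝ) * (2/5) - 1) ^ 2 + (min (2/5 : ℝ) (1 - 2/5)) ^ 2 = 1/5 := by
    rw [show (1 : ℝ) - 2/5 = 3/5 by norm_num, min_eq_left (by norm_num)]; norm_num
  constructor
  · intro k; rw [min_self, min_self]; ring_nf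
  · ext k
    simp only [Set.mem_setOf_eq, Set.mem_insert_iff, Set.mem_singleton_iff]
    constructor
    · rintro ⟨hk, hmin⟩
      have h1 : (2 * k - 1) ^ 2 + (min k (1 - k)) ^ 2 ≤ 1/5 := by
        have := hmin (2/5) (by constructor <;> norm_num)
        linarith [this, hval.le]
      have h2 := ccs_lb k hk
      have heq : (2 * k - 1) ^ 2 + (min k (1 - k)) ^ 2 = 1/5 := le_antisymm h1 h2
      rcases le_total k (1 - k) with h | h
      · left
        rw [min_eq_left h] at heq
        nlinarith [sq_nonneg (5 * k - 2)]
      · right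
        rw [min_eq_right h] at heq
        nlinarith [sq_nonneg (5 * k - 3)]
    · rintro (rfl | rfl)
      · refine ⟨by constructor <;> norm_num, fun k' hk' => ?_⟩
        rw [hval]; exact ccs_lb k' hk'
      · refine ⟨by constructor <;> norm_num, fun k' hk' => ?_⟩
        have : ((2 : ℝ) * (3/5) - 1) ^ 2 + (min (3/5 : ℝ) (1 - 3/5)) ^ 2 = 1/5 := by
          rw [show (1 : ℝ) - 3/5 = 2/5 by norm_num, min_eq_right (by norm_num)]; norm_num
        rw [this]; exact ccs_lb k' hk'
end

section
/- Let Q be a finite set of questions and let h₁, h₂ : Q → {0,1} be two distinct binary features (h₁(q₀) ≠ h₂(q₀) for some q₀ ∈ Q). Define the probes pᵢ⁺(q) = hᵢ(q), pᵢ⁻(q) = 1 − hᵢ(q) for i = 1, 2. Then both probes have total CCS loss equal to zero, yet their induced classifiers differ: f_{p₁}(q₀) ≠ f_{p₂}(q₀). Hence a classifier attaining optimal CCS loss is under-specified: distinct binary features give distinct optimal classifiers. -/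
lemma ccs_term_zero (h : ℝ) (hb : h = 0 ∨ h = 1) :
    (h - (1 - (1 - h))) ^ 2 + (min h (1 - h)) ^ 2 = 0 := by
  rcases hb with h0 | h1 <;> subst_vars <;> norm_num

/-- Two distinct binary features give probes that both attain zero
CCS loss yet induce classifiers that differ, so optimal-CCS-loss classifiers are
under-specified. -/
theorem optimal_ccs_classifier_underspecified {Q : Type*} [Fintype Q]
    (h₁ h₂ : Q → ℝ) (hb₁ : ∀ q, h₁ q = 0 ∨ h₁ q = 1) (hb₂ : ∀ q, h₂ q = 0 ∨ h₂ q = 1)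
    (q₀ : Q) (hne : h₁ q₀ ≠ h₂ q₀) :
    (∑ q : Q, ((h₁ q - (1 - (1 - h₁ q))) ^ 2 + (min (h₁ q) (1 - h₁ q)) ^ 2) = 0) ∧
    (∑ q : Q, ((h₂ q - (1 - (1 - h₂ q))) ^ 2 + (min (h₂ q) (1 - h₂ q)) ^ 2) = 0) ∧
    ((if (h₁ q₀ + (1 - (1 - h₁ q₀))) / 2 > 1 / 2 then (1:ℝ) else 0)
      ≠ (if (h₂ q₀ + (1 - (1 - h₂ q₀))) / 2 > 1 / 2 then (1:ℝ) else 0)) := by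
  refine ⟨Finset.sum_eq_zero fun q _ => ccs_term_zero _ (hb₁ q),
    Finset.sum_eq_zero fun q _ => ccs_term_zero _ (hb₂ q), ?_⟩
  rcases hb₁ q₀ with h1 | h1 <;> rcases hb₂ q₀ with h2 | h2 <;>
    rw [h1, h2] at hne ⊢
  all_goals norm_num at *
end
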